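/- If (a_n) and (b_n) are sequences of natural numbers that are ultimately equal (agree for all n ≥ N for some N), and (a_n) is ℕ-rational, then (b_n) is ℕ-rational. -/

import Mathlib

/-- A sequence of natural numbers is ℕ-rational if it admits a linear
representation `a n = λ Mⁿ γ` by matrices over ℕ, with `d ≥ 1`. -/
def NRational (a : ℕ → ℕ) : Prop :=
  ∃ (d : ℕ) (_ : 1 ≤ d) (lam : Matrix (Fin 1) (Fin d) ℕ)
    (M : Matrix (Fin d) (Fin d) ℕ) (gam : Matrix (Fin d) (Fin 1) ℕ),
    ∀ n : ℕ, a n = (lam * M ^ n * gam) 0 0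

lemma nrational_of_rep {ι : Type} [Fintype ι] [DecidableEq ι] [Nonempty ι]
    (lam : Matrix (Fin 1) ι ℕ) (M : Matrix ι ι ℕ) (gam : Matrix ι (Fin 1) ℕ)
    (a : ℕ → ℕ) (h : ∀ n, a n = (lam * M ^ n * gam) 0 0) : NRational a := by
  set e := Fintype.equivFin ι with he
  refine ⟨Fintype.card ι, Fintype.card_pos, lam.submatrix id e.symm,
    M.submatrix e.symm e.symm, gam.submatrix e.symm id, ?_⟩
  have hpow : ∀ n, (M.submatrix e.symm e.symm) ^ n = (M ^ n).submatrix e.symm e.symm := by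
    intro n
    induction n with
    | zero => simp [Matrix.submatrix_one_equiv]
    | succ n ih => rw [pow_succ, pow_succ, ih, Matrix.submatrix_mul_equiv]
  intro n
  rw [h n, hpow, Matrix.submatrix_mul_equiv, Matrix.submatrix_mul_equiv]
  rfl

lemma ind_sum {N : ℕ} (n : ℕ) (f : Fin N → ℕ) :
    (∑ i : Fin N, (if (i : ℕ) = n then 1 else 0) * f i)
      = if hn : n < N then f ⟨n, hn⟩ else 0 := by
  split
  next hn =>
    rw [Finset.sum_eq_single (⟨n, hn⟩ : Fin N)]
    · simp
    · intro i _ hie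
      have : ¬((i : ℕ) = n) := fun hc => hie (Fin.ext hc)
      simp [this]
    · simp
  next hn =>
    apply Finset.sum_eq_zero
    intro i _
    have : ¬((i : ℕ) = n) := fun hc => hn (hc ▸ i.isLt)
    simp [this]

/-- If two sequences of natural numbers are ultimately equal and one is
ℕ-rational, then so is the other. -/
theorem nrational_of_eventually_eq (a b : ℕ → ℕ) (N : ℕ)
    (h : ∀ n, N ≤ n → a n = b n) (ha : NRational a) : NRational b := by
  obtain ⟨d, hd, lam, M, gam, hrep⟩ := ha
  rcases Nat.eq_zero_or_pos N with hN | hN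
  · exact ⟨d, hd, lam, M, gam, fun n => by rw [← h n (hN ▸ Nat.zero_le n)]; exact hrep n⟩
  haveI : Nonempty (Fin N ⊕ Fin d) := ⟨Sum.inl ⟨0, hN⟩⟩
  set lam' : Matrix (Fin 1) (Fin N ⊕ Fin d) ℕ :=
    fun _ j => Sum.elim (fun i : Fin N => if (i : ℕ) = 0 then 1 else 0) (fun _ : Fin d => 0) j
    with hlam'
  set M' : Matrix (Fin N ⊕ Fin d) (Fin N ⊕ Fin d) ℕ :=
    Matrix.fromBlocks
      (fun i j => if (i : ℕ) + 1 = (j : ℕ) then 1 else 0)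
      (fun i j => if (i : ℕ) = N - 1 then (lam * M ^ N) 0 j else 0)
      0 M with hM'
  set gam' : Matrix (Fin N ⊕ Fin d) (Fin 1) ℕ :=
    fun i _ => Sum.elim (fun k : Fin N => b (k : ℕ)) (fun j : Fin d => gam j 0) i with hgam'
  set v : ℕ → Matrix (Fin 1) (Fin N ⊕ Fin d) ℕ :=
    fun n _ j => Sum.elim (fun i : Fin N => if (i : ℕ) = n then 1 else 0)
      (fun j : Fin d => if N ≤ n then (lam * M ^ n) 0 j else 0) j with hv
  have key : ∀ n, lam' * M' ^ n = v n := by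
    intro n
    induction n with
    | zero =>
      ext i j
      fin_cases i
      rcases j with i | j
      · rw [pow_zero, Matrix.mul_one]; simp [hlam', hv]
      · rw [pow_zero, Matrix.mul_one]; simp [hlam', hv, Nat.not_le.mpr hN]
    | succ n ih =>
      rw [pow_succ, ← Matrix.mul_assoc, ih]
      ext i j
      fin_cases i
      rcases j with j | j
      · -- left block column
        show (v n * M') 0 (Sum.inl j) = v (n + 1) 0 (Sum.inl j)
        rw [Matrix.mul_apply, Fintype.sum_sum_type]
        simp only [hv, hM', Matrix.fromBlocks, Matrix.of_apply, Sum.elim_inl, Sum.elim_inr, Matrix.fromBlocks_apply₁₁,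
          Matrix.fromBlocks_apply₂₁, Matrix.zero_apply, mul_zero, Finset.sum_const_zero,
          add_zero]
        rw [ind_sum n (fun i : Fin N => if (i : ℕ) + 1 = (j : ℕ) then 1 else 0)]
        split
        next hn => simp [eq_comm]
        next hn =>
          have hj : ¬((j : ℕ) = n + 1) := by have := j.isLt; omega
          simp [hj]
      · -- right block column
        show (v n * M') 0 (Sum.inr j) = v (n + 1) 0 (Sum.inr j)
        rw [Matrix.mul_apply, Fintype.sum_sum_type]
        simp only [hv, hM', Matrix.fromBlocks, Matrix.of_apply, Sum.elim_inl, Sum.elim_inr, Matrix.fromBlocks_apply₁₂,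
          Matrix.fromBlocks_apply₂₂]
        rw [ind_sum n (fun i : Fin N => if (i : ℕ) = N - 1 then (lam * M ^ N) 0 j else 0)]
        by_cases hn : N ≤ n
        · rw [dif_neg (by omega : ¬ n < N)]
          simp only [if_pos hn, if_pos (Nat.le_succ_of_le hn), zero_add]
          rw [show lam * M ^ (n + 1) = lam * M ^ n * M by rw [pow_succ, Matrix.mul_assoc],
            Matrix.mul_apply]
        · simp only [if_neg hn, zero_mul, Finset.sum_const_zero, add_zero]
          rw [dif_pos (by omega : n < N)]
          by_cases h1 : n + 1 = N
          · have h2 : n = N - 1 := by omega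
            rw [if_pos h2, if_pos (by omega : N ≤ n + 1),
              show M ^ N = M ^ (n + 1) by rw [h1]]
          · simp [show ¬ n = N - 1 by omega, show ¬ N ≤ n + 1 by omega]
  apply nrational_of_rep lam' M' gam'
  intro n
  rw [Matrix.mul_assoc, ← Matrix.mul_assoc lam', key n, Matrix.mul_apply,
    Fintype.sum_sum_type]
  simp only [hv, hgam', Sum.elim_inl, Sum.elim_inr]
  rw [ind_sum n (fun i : Fin N => b (i : ℕ))]
  by_cases hn : n < N
  · rw [dif_pos hn]
    simp [Nat.not_le.mpr hn]
  · rw [dif_neg hn, zero_add]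
    have hn' : N ≤ n := by omega
    simp only [if_pos hn']
    rw [← h n hn', hrep n, Matrix.mul_apply]
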